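/- Assume G_r is a graph on {1,...,r} containing the edge (1, r) (i.e., x_1 x_r ∈ I_r), and let m = min{j - i : (i,j) ∈ E(G_r)}. Then for all n ≥ 3r, every maximal independent set of G_n has size at least m. -/
import Mathlib


/-- `(k,l)` lies in the triangle `Δ((i,j), n-r)` for some edge `(i,j) ∈ E` of `G_r`,
i.e. `0 ≤ k - i ≤ l - j ≤ n - r` (written additively). -/
def triRel (E : Set (ℕ × ℕ)) (r n k l : ℕ) : Prop :=
  ∃ q ∈ E, q.1 ≤ k ∧ k + q.2 ≤ l + q.1 ∧ l + r ≤ n + q.2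

/-- The graph `G_n` of the invariant chain determined by the edge set `E` of `G_r`:
`(k,l)` with `k < l` is an edge of `G_n` iff `(k,l) ∈ Δ((i,j), n-r)` for some `(i,j) ∈ E`. -/
def chainGraph (E : Set (ℕ × ℕ)) (r n : ℕ) : SimpleGraph ℕ :=
  SimpleGraph.fromRel (triRel E r n)

/-- `E` is a set of edges `(i,j)` of a graph `G_r` on `{1,…,r}` with `i < j`. -/
def goodEdges (E : Set (ℕ × ℕ)) (r : ℕ) : Prop :=
  ∀ q ∈ E, 1 ≤ q.1 ∧ q.1 < q.2 ∧ q.2 ≤ r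

lemma chainGraph_adj_iff (E : Set (ℕ × ℕ)) (r n u v : ℕ) :
    (chainGraph E r n).Adj u v ↔ u ≠ v ∧ (triRel E r n u v ∨ triRel E r n v u) := by
  simp [chainGraph, SimpleGraph.fromRel_adj]

/-- Assume `(1,r) ∈ E(G_r)` and let `m = min{j - i : (i,j) ∈ E(G_r)}`. Then for all
`n ≥ 3r`, every maximal independent set of `G_n` (inside `{1,…,n}`) has size ≥ `m`. -/
theorem maximal_independent_set_size (E : Set (ℕ × ℕ)) (r m n : ℕ) (hE : goodEdges E r)
    (h1r : (1, r) ∈ E) (hm : ∀ q ∈ E, q.1 + m ≤ q.2) (hattain : ∃ q ∈ E, q.2 = q.1 + m)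
    (hn : 3 * r ≤ n) (U : Finset ℕ) (hUsub : ↑U ⊆ Set.Icc 1 n)
    (hind : ∀ u ∈ U, ∀ v ∈ U, ¬ (chainGraph E r n).Adj u v)
    (hmax : ∀ v ∈ Set.Icc 1 n, v ∉ U →
      ¬ (∀ a ∈ insert v U, ∀ b ∈ insert v U, ¬ (chainGraph E r n).Adj a b)) :
    m ≤ U.card := by
  by_cases hm0 : m = 0
  · simp [hm0]
  obtain ⟨-, h1lt, -⟩ := hE (1, r) h1r
  have hmr : 1 + m ≤ r := hm (1, r) h1r
  have hUb : ∀ u ∈ U, 1 ≤ u ∧ u ≤ n := fun u hu => hUsub hu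
  -- adjacency forces a gap of at least m
  have gap : ∀ k l, triRel E r n k l → k + m ≤ l := by
    rintro k l ⟨q, hq, c1, c2, c3⟩
    have := hm q hq
    omega
  -- triRel forces strict inequality
  have tlt : ∀ k l, triRel E r n k l → k < l := by
    rintro k l ⟨q, hq, c1, c2, c3⟩
    obtain ⟨hq1, hq2, hq3⟩ := hE q hq
    omega
  -- maximality: every vertex outside U is adjacent to some vertex of U
  have key : ∀ v, 1 ≤ v → v ≤ n → v ∉ U →
      ∃ u ∈ U, triRel E r n u v ∨ triRel E r n v u := by
    intro v hv1 hvn hvU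
    by_contra hcon
    push_neg at hcon
    apply hmax v ⟨hv1, hvn⟩ hvU
    intro x hx y hy hAdj
    obtain ⟨hxy, hrel⟩ := (chainGraph_adj_iff E r n x y).mp hAdj
    rcases Finset.mem_insert.mp hx with rfl | hx'
    · rcases Finset.mem_insert.mp hy with rfl | hy'
      · exact hxy rfl
      · rcases hrel with h | h
        · exact (hcon y hy').2 h
        · exact (hcon y hy').1 h
    · rcases Finset.mem_insert.mp hy with rfl | hy'
      · rcases hrel with h | h
        · exact (hcon x hx').1 h
        · exact (hcon x hx').2 h
      · exact hind x hx' y hy' hAdj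
  -- U is nonempty
  have hUne : U.Nonempty := by
    by_contra h
    rw [Finset.not_nonempty_iff_eq_empty] at h
    obtain ⟨u, hu, -⟩ := key 1 le_rfl (by omega) (by simp [h])
    simp [h] at hu
  set a := U.min' hUne with ha_def
  set b := U.max' hUne with hb_def
  have ha : a ∈ U := U.min'_mem hUne
  have hb : b ∈ U := U.max'_mem hUne
  have ha1 : 1 ≤ a := (hUb a ha).1
  have hbn : b ≤ n := (hUb b hb).2
  have hab : a ≤ b := U.min'_le b hb
  -- the span of U is less than r - 1, via the edge (1, r)
  have hspan : b + 1 < a + r := by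
    by_contra h
    push_neg at h
    have htri : triRel E r n a b := ⟨(1, r), h1r, by omega, by omega, by omega⟩
    exact hind a ha b hb ((chainGraph_adj_iff E r n a b).mpr ⟨by omega, Or.inl htri⟩)
  -- the span of U is at least m - 1
  have hd : a + m ≤ b + 1 := by
    by_contra h
    push_neg at h
    by_cases hbn' : b + 1 ≤ n
    · have hnotU : b + 1 ∉ U := fun hmem => absurd (U.le_max' _ hmem) (by omega)
      obtain ⟨u, hu, h1 | h2⟩ := key (b + 1) (by omega) hbn' hnotU
      · have := gap u (b + 1) h1
        have := U.min'_le u hu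
        omega
      · have := gap (b + 1) u h2
        have := U.le_max' u hu
        omega
    · by_cases ha2 : 2 ≤ a
      · have hnotU : a - 1 ∉ U := fun hmem => absurd (U.min'_le _ hmem) (by omega)
        obtain ⟨u, hu, h1 | h2⟩ := key (a - 1) (by omega) (by omega) hnotU
        · have := gap u (a - 1) h1
          have := U.min'_le u hu
          omega
        · have := gap (a - 1) u h2
          have := U.le_max' u hu
          omega
      · omega
  by_cases hcase : b + r ≤ n + 1
  · -- U is not near the right boundary: [b - m + 1, b] ⊆ U
    have hsub : Finset.Icc (b + 1 - m) b ⊆ U := by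
      intro v hv
      rw [Finset.mem_Icc] at hv
      by_contra hvU
      obtain ⟨u, hu, h1 | h2⟩ := key v (by omega) (by omega) hvU
      · -- triRel u v : move the edge to (u, b)
        have hlt := tlt u v h1
        have hub := U.le_max' u hu
        obtain ⟨q, hq, c1, c2, c3⟩ := h1
        obtain ⟨hq1, hq2, hq3⟩ := hE q hq
        have htri : triRel E r n u b := ⟨q, hq, c1, by omega, by omega⟩
        exact hind u hu b hb
          ((chainGraph_adj_iff E r n u b).mpr ⟨by omega, Or.inl htri⟩)
      · have := gap v u h2
        have := U.le_max' u hu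
        omega
    calc m = (Finset.Icc (b + 1 - m) b).card := by rw [Nat.card_Icc]; omega
    _ ≤ U.card := Finset.card_le_card hsub
  · -- U is near the right boundary, hence far from the left: [a, a + m - 1] ⊆ U
    have har : r ≤ a := by omega
    have hsub : Finset.Icc a (a + m - 1) ⊆ U := by
      intro v hv
      rw [Finset.mem_Icc] at hv
      by_contra hvU
      obtain ⟨u, hu, h1 | h2⟩ := key v (by omega) (by omega) hvU
      · have := gap u v h1
        have := U.min'_le u hu
        omega
      · -- triRel v u : move the edge to (a, u)
        have hlt := tlt v u h2
        obtain ⟨q, hq, c1, c2, c3⟩ := h2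
        obtain ⟨hq1, hq2, hq3⟩ := hE q hq
        have htri : triRel E r n a u := ⟨q, hq, by omega, by omega, c3⟩
        exact hind a ha u hu
          ((chainGraph_adj_iff E r n a u).mpr ⟨by omega, Or.inl htri⟩)
    calc m = (Finset.Icc a (a + m - 1)).card := by rw [Nat.card_Icc]; omega
    _ ≤ U.card := Finset.card_le_card hsub
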